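/- Let α ∈ ℂ be a root of (a+2)x⁴ + 1 = 0 (so [α:α:1] lies on C_{a,0}). Then H_F(α,α,1) = −144(a−6)(a+2)α⁴, where H_F is the Hessian determinant of F(x,y,z) = x⁴ + y⁴ + z⁴ + a x² y². Consequently, [α:α:1] is a flex point of C_{a,0} if and only if a = 6. -/
import Mathlib


open MvPolynomial

/-- The Kuribayashi quartic with one parameter: `F = x⁴ + y⁴ + z⁴ + a x² y²`. -/
noncomputable def Fq (a : ℂ) : MvPolynomial (Fin 3) ℂ :=
  X 0 ^ 4 + X 1 ^ 4 + X 2 ^ 4 + C a * X 0 ^ 2 * X 1 ^ 2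

/-- The Hessian determinant of `Fq a`. -/
noncomputable def Hq (a : ℂ) : MvPolynomial (Fin 3) ℂ :=
  Matrix.det (Matrix.of fun i j : Fin 3 => pderiv i (pderiv j (Fq a)))

/-- For `α` a root of `(a+2)x⁴ + 1 = 0`, we have
`H_F(α,α,1) = -144(a-6)(a+2)α⁴`, and `[α:α:1]` is a flex of `C_{a,0}` iff `a = 6`. -/
theorem alpha_alpha_one_flex_iff (a α : ℂ) (ha : (a ^ 2 - 1) * (a ^ 2 - 4) ≠ 0)
    (hα : (a + 2) * α ^ 4 + 1 = 0) :
    eval ![α, α, 1] (Hq a) = -144 * (a - 6) * (a + 2) * α ^ 4 ∧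
    (eval ![α, α, 1] (Hq a) = 0 ↔ a = 6) := by
  have key : eval ![α, α, 1] (Hq a) = -144 * (a - 6) * (a + 2) * α ^ 4 := by
    simp only [Hq, Fq, Matrix.det_fin_three, Matrix.of_apply, map_add, map_mul, map_sub,
      pderiv_X, pderiv_C, pderiv_pow, eval_add, eval_mul, eval_sub, eval_pow, eval_C, eval_X]
    have h4 : (4 : MvPolynomial (Fin 3) ℂ) = C 4 := (map_ofNat C 4).symm
    have h2' : (2 : MvPolynomial (Fin 3) ℂ) = C 2 := (map_ofNat C 2).symm
    simp [h4, h2', Pi.single_apply]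
    ring
  refine ⟨key, ?_⟩
  have h2 : eval ![α, α, 1] (Hq a) = 144 * (a - 6) := by
    rw [key]; linear_combination (-144 * (a-6)) * hα
  rw [h2]
  constructor
  · intro h
    have : (144 : ℂ) * (a - 6) = 0 := h
    have h144 : (144 : ℂ) ≠ 0 := by norm_num
    have := (mul_eq_zero.mp this).resolve_left h144
    exact sub_eq_zero.mp this
  · intro h; rw [h]; ring
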